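/- Let A be a unital C*-algebra and p, a ∈ A with p a projection and a positive. If ‖pap − p‖ < 1/2, then p is Cuntz subequivalent to a (p ≲ a), i.e., there is a sequence (x_n) in A with ‖x_n a x_n* − p‖ → 0. -/

import Mathlib

open Filter Pointwise

open StarAlgebra in
/-- If `b` is selfadjoint and commutes with a selfadjoint element `a`, then `b` commutes
with any real continuous function of `a`. -/
lemma commute_cfc_of_commute {A : Type*} [CStarAlgebra A] {a b : A}
    (ha : IsSelfAdjoint a) (hb : IsSelfAdjoint b) (hab : b * a = a * b) (f : ℝ → ℝ) :
    b * cfc f a = cfc f a * b := by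
  have hna : IsStarNormal a := ha.isStarNormal
  rw [cfc_real_eq_complex f ha]
  by_cases hg : ContinuousOn (fun x : ℂ => (f x.re : ℂ)) (spectrum ℂ a)
  · have hz : cfc (fun x : ℂ => (f x.re : ℂ)) a ∈ elemental ℂ a := by
      rw [cfc_apply _ a hna hg, cfcHom_eq_of_isStarNormal]
      exact SetLike.coe_mem _
    have hcl : IsClosed ((StarSubalgebra.centralizer ℂ {b} : StarSubalgebra ℂ A) : Set A) := by
      rw [StarSubalgebra.coe_centralizer]
      have hset : (({b} ∪ star {b} : Set A).centralizer : Set A)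
          = ⋂ g ∈ ({b} ∪ star {b} : Set A), {x | g * x = x * g} := by
        ext x; simp [Set.mem_centralizer_iff]
      rw [hset]
      exact isClosed_biInter fun g _ =>
        isClosed_eq (continuous_const.mul continuous_id) (continuous_id.mul continuous_const)
    have hmem : a ∈ StarSubalgebra.centralizer ℂ {b} := by
      rw [StarSubalgebra.mem_centralizer_iff]
      rintro g rfl
      exact ⟨hab, by rw [hb.star_eq]; exact hab⟩
    have hle := elemental.le_of_mem hcl hmem
    have hcent := hle hz
    rw [StarSubalgebra.mem_centralizer_iff] at hcent
    exact (hcent b rfl).1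
  · rw [cfc_apply_of_not_continuousOn a hg]
    simp

/-- In a unital C*-algebra, if `p` is a projection, `a ≥ 0`, and
`‖p a p - p‖ < 1/2`, then `p ≲ a` in the sense of Cuntz: there is a sequence `(x n)`
with `‖x n * a * star (x n) - p‖ → 0`. -/
theorem stmt11 {A : Type*} [CStarAlgebra A] [PartialOrder A] [StarOrderedRing A]
    (p a : A) (hp : IsSelfAdjoint p) (hp2 : p * p = p) (ha : 0 ≤ a)
    (hnear : ‖p * a * p - p‖ < 1 / 2) :
    ∃ x : ℕ → A, Tendsto (fun n => ‖x n * a * star (x n) - p‖) atTop (nhds 0) := by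
  rcases subsingleton_or_nontrivial A with hA | hA
  · refine ⟨fun _ => 0, ?_⟩
    simp [Subsingleton.elim p (0 : A)]
  have hasa : IsSelfAdjoint a := IsSelfAdjoint.of_nonneg ha
  set t : A := p - p * a * p with ht_def
  have ht_sa : IsSelfAdjoint t := by
    simp only [IsSelfAdjoint, ht_def, star_sub, star_mul, hp.star_eq, hasa.star_eq, mul_assoc]
  set u : A := 1 - t with hu_def
  have hu_sa : IsSelfAdjoint u := (IsSelfAdjoint.one (R := A)).sub ht_sa
  have ht_norm : ‖t‖ < 1 / 2 := by
    rw [ht_def, norm_sub_rev]; exact hnear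
  -- spectrum of u lies in [1/2, ∞)
  have hspec : spectrum ℝ u ⊆ Set.Ici (1 / 2) := by
    intro μ hμ
    have h1 : μ ∈ ({(1 : ℝ)} : Set ℝ) - spectrum ℝ t := by
      rw [spectrum.singleton_sub_eq]
      simpa [hu_def, Algebra.algebraMap_eq_smul_one] using hμ
    obtain ⟨x, hx, ν, hν, hxν⟩ := h1
    rw [Set.mem_singleton_iff] at hx
    subst hx
    have hν' : |ν| ≤ ‖t‖ := by
      simpa [Real.norm_eq_abs] using spectrum.norm_le_norm_of_mem hν
    have habs : |ν| < 1 / 2 := lt_of_le_of_lt hν' ht_norm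
    have hν2 : ν ≤ 1 / 2 := le_of_lt (lt_of_abs_lt habs)
    have hμν : μ = 1 - ν := hxν.symm
    simp only [Set.mem_Ici]
    linarith
  -- the function s ↦ (√(max s (1/2)))⁻¹
  set f : ℝ → ℝ := fun s => (Real.sqrt (max s (1 / 2)))⁻¹ with hf_def
  have hf_cont : Continuous f := by
    apply Continuous.inv₀
    · exact Real.continuous_sqrt.comp (continuous_id.max continuous_const)
    · intro s
      have h0 : (0 : ℝ) < max s (1 / 2) := lt_max_of_lt_right (by norm_num)
      positivity
  have hf_val : ∀ s : ℝ, s ∈ spectrum ℝ u → f s * f s * s = 1 := by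
    intro s hs
    have hs2 : (1 : ℝ) / 2 ≤ s := hspec hs
    have hs0 : (0 : ℝ) < s := by linarith
    rw [hf_def]
    simp only [max_eq_left hs2]
    rw [← mul_inv, Real.mul_self_sqrt hs0.le]
    field_simp
  set c : A := cfc f u with hc_def
  have hc_sa : IsSelfAdjoint c := cfc_predicate f u
  -- general helper for triple products of cfc's of u
  have hcfc3 : ∀ g h k : ℝ → ℝ, Continuous g → Continuous h → Continuous k →
      (∀ s ∈ spectrum ℝ u, g s * h s * k s = 1) → cfc g u * cfc h u * cfc k u = 1 := by
    intro g h k hg hh hk hval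
    rw [← cfc_mul g h u hg.continuousOn hh.continuousOn,
        ← cfc_mul (fun x => g x * h x) k u (hg.mul hh).continuousOn hk.continuousOn]
    calc cfc (fun s => g s * h s * k s) u = cfc (fun _ : ℝ => (1 : ℝ)) u := cfc_congr hval
      _ = 1 := by rw [cfc_const (1 : ℝ) u hu_sa, map_one]
  have h2 : u * (c * c) = 1 := by
    have := hcfc3 id f f continuous_id hf_cont hf_cont
      (fun s hs => by
        have h := hf_val s hs
        simp only [id_eq]
        linarith [h, mul_comm (f s * f s) s]
        )
    rw [cfc_id ℝ u hu_sa] at this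
    rw [← mul_assoc]
    exact this
  have h3 : c * u * c = 1 := by
    have := hcfc3 f id f hf_cont continuous_id hf_cont
      (fun s hs => by
        have h := hf_val s hs
        simp only [id_eq]
        nlinarith [h])
    rwa [cfc_id ℝ u hu_sa] at this
  -- p commutes with u
  have hpu1 : p * u = p * a * p := by
    rw [hu_def, ht_def]
    simp only [mul_sub, mul_one, ← mul_assoc, hp2, sub_sub_cancel]
  have hpu2 : u * p = p * a * p := by
    rw [hu_def, ht_def]
    simp only [sub_mul, one_mul, mul_assoc, hp2, sub_sub_cancel]
  have hpc : p * c = c * p :=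
    commute_cfc_of_commute hu_sa hp (hpu1.trans hpu2.symm) f
  have hpap : p * a * p = u - (1 - p) := by
    rw [hu_def, ht_def]; abel
  have h1p_c : c * (1 - p) = (1 - p) * c := by
    rw [mul_sub, sub_mul, mul_one, one_mul, hpc]
  have hfix : (1 - p) * u = 1 - p := by
    rw [hu_def, ht_def]
    simp only [sub_mul, mul_sub, one_mul, mul_one, ← mul_assoc, hp2]
    abel
  -- the key algebraic identity
  have hxa : (p * c) * a * (c * p) = p := by
    have e1 : (p * c) * a * (c * p) = c * (p * a * p) * c := by
      rw [hpc]
      simp only [mul_assoc]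
      rw [← hpc]
    rw [e1, hpap, mul_sub, sub_mul, h3]
    have e2 : c * (1 - p) * c = 1 - p := by
      rw [h1p_c, mul_assoc]
      conv_lhs => rw [show (1 - p : A) = (1 - p) * u from hfix.symm]
      rw [mul_assoc, h2, mul_one]
    rw [e2, sub_sub_cancel]
  refine ⟨fun _ => p * c, ?_⟩
  have hstar : star (p * c) = c * p := by
    rw [star_mul, hc_sa.star_eq, hp.star_eq]
  simp only [hstar, hxa, sub_self, norm_zero]
  exact tendsto_const_nhds
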